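/- Shapley-Taylor efficiency: Σ_{i,j ∈ [d]} Φ_{ij}(ν) = ν([d]) − ν(∅), where Φ_{ii}(ν) = ν({i}) − ν(∅) and for i ≠ j, Φ_{ij}(ν) = Σ_{S ⊆ [d]∖{i,j}} W(|S|,d)·∇_{ij}(S) with ∇_{ij}(S) = ν(S∪{i,j}) − ν(S∪{j}) − ν(S∪{i}) + ν(S). -/

import Mathlib

open Finset

noncomputable def W (k n : ℕ) : ℝ :=
  (Nat.factorial k * Nat.factorial (n - k - 1) : ℝ) / (Nat.factorial n : ℝ)

/-- Shapley-Taylor index of the pair (i, j) for the game ν on d players. -/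
noncomputable def shapleyTaylor {d : ℕ} (ν : Finset (Fin d) → ℝ) (i j : Fin d) : ℝ :=
  if i = j then ν {i} - ν ∅
  else ∑ S ∈ ((Finset.univ.erase i).erase j).powerset,
    W S.card d * (ν (insert i (insert j S)) - ν (insert j S) - ν (insert i S) + ν S)

lemma ST_insert_sum {α : Type*} [DecidableEq α] (U : Finset α) (j : α) (hj : j ∈ U)
    (c : ℕ → ℝ) (f : Finset α → ℝ) :
    ∑ S ∈ (U.erase j).powerset, c S.card * f (insert j S)
      = ∑ T ∈ U.powerset.filter (fun T => j ∈ T), c (T.card - 1) * f T := by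
  apply Finset.sum_nbij' (fun S => insert j S) (fun T => T.erase j)
  · intro S hS
    simp only [mem_powerset] at hS
    simp only [mem_filter, mem_powerset]
    exact ⟨insert_subset hj (hS.trans (erase_subset _ _)), mem_insert_self _ _⟩
  · intro T hT
    simp only [mem_filter, mem_powerset] at hT
    simpa only [mem_powerset] using erase_subset_erase _ hT.1
  · intro S hS
    simp only [mem_powerset] at hS
    exact erase_insert (fun h => (mem_erase.mp (hS h)).1 rfl)
  · intro T hT
    simp only [mem_filter] at hT
    exact insert_erase hT.2
  · intro S hS
    simp only [mem_powerset] at hS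
    have hjS : j ∉ S := fun h => (mem_erase.mp (hS h)).1 rfl
    rw [card_insert_of_notMem hjS]
    simp

lemma ST_sumC {α : Type*} [DecidableEq α] (U : Finset α) (c : ℕ → ℝ) (f : Finset α → ℝ) :
    ∑ j ∈ U, ∑ S ∈ (U.erase j).powerset, c S.card * (f (insert j S) - f S)
      = ∑ T ∈ U.powerset,
          ((T.card : ℝ) * c (T.card - 1) - ((U.card : ℝ) - T.card) * c T.card) * f T := by
  have split : ∀ j ∈ U, ∑ S ∈ (U.erase j).powerset, c S.card * (f (insert j S) - f S)
      = (∑ S ∈ (U.erase j).powerset, c S.card * f (insert j S))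
        - ∑ S ∈ (U.erase j).powerset, c S.card * f S := by
    intro j hj
    rw [← Finset.sum_sub_distrib]
    exact Finset.sum_congr rfl fun S _ => by ring
  rw [Finset.sum_congr rfl split, Finset.sum_sub_distrib]
  have h1 : ∑ j ∈ U, ∑ S ∈ (U.erase j).powerset, c S.card * f (insert j S)
      = ∑ T ∈ U.powerset, (T.card : ℝ) * (c (T.card - 1) * f T) := by
    rw [Finset.sum_congr rfl (fun j hj => ST_insert_sum U j hj c f)]
    rw [Finset.sum_comm' (s' := fun T => T) (t' := U.powerset)
      (by intro j T
          simp only [mem_filter, mem_powerset]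
          constructor
          · rintro ⟨hjU, hTU, hjT⟩; exact ⟨hjT, hTU⟩
          · rintro ⟨hjT, hTU⟩; exact ⟨hTU hjT, hTU, hjT⟩)]
    refine Finset.sum_congr rfl fun T hT => ?_
    rw [Finset.sum_const, nsmul_eq_mul]
  have h2 : ∑ j ∈ U, ∑ S ∈ (U.erase j).powerset, c S.card * f S
      = ∑ T ∈ U.powerset, ((U.card : ℝ) - T.card) * (c T.card * f T) := by
    rw [Finset.sum_comm' (s' := fun S => U \ S) (t' := U.powerset)
      (by intro j S
          simp only [mem_powerset, mem_sdiff, subset_erase]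
          constructor
          · rintro ⟨hjU, hSU, hjS⟩; exact ⟨⟨hjU, hjS⟩, hSU⟩
          · rintro ⟨⟨hjU, hjS⟩, hSU⟩; exact ⟨hjU, hSU, hjS⟩)]
    refine Finset.sum_congr rfl fun T hT => ?_
    rw [Finset.sum_const, nsmul_eq_mul, card_sdiff_of_subset (mem_powerset.mp hT)]
    rw [Nat.cast_sub (card_le_card (mem_powerset.mp hT))]
  rw [h1, h2, ← Finset.sum_sub_distrib]
  exact Finset.sum_congr rfl fun T _ => by ring

lemma ST_coefA_zero {d : ℕ} (hd : 1 ≤ d) :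
    (0 : ℝ) * W (0 - 1) d - ((d : ℝ) - 0) * W 0 d = -1 := by
  obtain ⟨m, rfl⟩ := Nat.exists_eq_add_of_le hd
  have h1 : 1 + m - 0 - 1 = m := by omega
  simp only [W, h1]
  have hne : ((Nat.factorial (1 + m) : ℝ)) ≠ 0 := by
    exact_mod_cast (Nat.factorial_ne_zero _)
  have hfac : (Nat.factorial (1 + m) : ℝ) = (1 + m) * Nat.factorial m := by
    rw [Nat.add_comm 1 m, Nat.factorial_succ]; push_cast; ring
  rw [hfac] at *
  field_simp
  push_cast; ring

lemma ST_coefA_top {d : ℕ} (hd : 1 ≤ d) :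
    (d : ℝ) * W (d - 1) d - ((d : ℝ) - d) * W d d = 1 := by
  obtain ⟨m, rfl⟩ := Nat.exists_eq_add_of_le hd
  have h1 : 1 + m - 1 = m := by omega
  have h2 : 1 + m - m - 1 = 0 := by omega
  have h3 : 1 + m - (1 + m) - 1 = 0 := by omega
  simp only [W, h1, h2, h3]
  have hfac : (Nat.factorial (1 + m) : ℝ) = (1 + m) * Nat.factorial m := by
    rw [Nat.add_comm 1 m, Nat.factorial_succ]; push_cast; ring
  have hm : (Nat.factorial m : ℝ) ≠ 0 := by exact_mod_cast (Nat.factorial_ne_zero _)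
  rw [hfac, Nat.factorial_zero]
  field_simp
  push_cast; ring

lemma ST_coefA_mid {d t : ℕ} (ht : 1 ≤ t) (htd : t < d) :
    (t : ℝ) * W (t - 1) d - ((d : ℝ) - t) * W t d = 0 := by
  obtain ⟨t', rfl⟩ := Nat.exists_eq_add_of_le ht
  obtain ⟨k, rfl⟩ := Nat.exists_eq_add_of_lt htd
  have h1 : 1 + t' - 1 = t' := by omega
  have h2 : 1 + t' + k + 1 - t' - 1 = k + 1 := by omega
  have h3 : 1 + t' + k + 1 - (1 + t') - 1 = k := by omega
  simp only [W, h1, h2, h3]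
  have hne : ((Nat.factorial (1 + t' + k + 1) : ℝ)) ≠ 0 := by
    exact_mod_cast (Nat.factorial_ne_zero _)
  have hf1 : (Nat.factorial (1 + t') : ℝ) = (1 + t') * Nat.factorial t' := by
    rw [Nat.add_comm 1 t', Nat.factorial_succ]; push_cast; ring
  have hf2 : (Nat.factorial (k + 1) : ℝ) = (k + 1) * Nat.factorial k := by
    rw [Nat.factorial_succ]; push_cast; ring
  rw [hf1, hf2]
  field_simp
  push_cast; ring

lemma ST_coefB_zero {d : ℕ} (hd : 1 ≤ d) :
    (0 : ℝ) * W (0 - 1) d - ((↑(d - 1) : ℝ) - 0) * W 0 d = W 0 d - 1 := by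
  obtain ⟨m, rfl⟩ := Nat.exists_eq_add_of_le hd
  have h1 : 1 + m - 0 - 1 = m := by omega
  have h2 : 1 + m - 1 = m := by omega
  simp only [W, h1, h2]
  have hfac : (Nat.factorial (1 + m) : ℝ) = (1 + m) * Nat.factorial m := by
    rw [Nat.add_comm 1 m, Nat.factorial_succ]; push_cast; ring
  have hm : (Nat.factorial m : ℝ) ≠ 0 := by exact_mod_cast (Nat.factorial_ne_zero _)
  rw [hfac]
  field_simp
  try ring

lemma ST_coefB_pos {d t : ℕ} (ht : 1 ≤ t) (htd : t < d) :
    (t : ℝ) * W (t - 1) d - ((↑(d - 1) : ℝ) - t) * W t d = W t d := by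
  obtain ⟨t', rfl⟩ := Nat.exists_eq_add_of_le ht
  obtain ⟨k, rfl⟩ := Nat.exists_eq_add_of_lt htd
  have h1 : 1 + t' - 1 = t' := by omega
  have h2 : 1 + t' + k + 1 - t' - 1 = k + 1 := by omega
  have h3 : 1 + t' + k + 1 - (1 + t') - 1 = k := by omega
  have h4 : 1 + t' + k + 1 - 1 = t' + k + 1 := by omega
  simp only [W, h1, h2, h3, h4]
  have hne : ((Nat.factorial (1 + t' + k + 1) : ℝ)) ≠ 0 := by
    exact_mod_cast (Nat.factorial_ne_zero _)
  have hf1 : (Nat.factorial (1 + t') : ℝ) = (1 + t') * Nat.factorial t' := by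
    rw [Nat.add_comm 1 t', Nat.factorial_succ]; push_cast; ring
  have hf2 : (Nat.factorial (k + 1) : ℝ) = (k + 1) * Nat.factorial k := by
    rw [Nat.factorial_succ]; push_cast; ring
  rw [hf1, hf2]
  field_simp
  push_cast; ring

lemma ST_sum_coefA {α : Type*} [DecidableEq α] {d : ℕ} (hd : 1 ≤ d) (U : Finset α)
    (hU : U.card = d) (g : Finset α → ℝ) :
    ∑ T ∈ U.powerset,
        ((T.card : ℝ) * W (T.card - 1) d - ((U.card : ℝ) - T.card) * W T.card d) * g T
      = g U - g ∅ := by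
  have hne : (∅ : Finset α) ≠ U := by
    intro h
    have : U.card = 0 := by rw [← h]; simp
    omega
  have hsub : ({∅, U} : Finset (Finset α)) ⊆ U.powerset := by
    intro T hT
    simp only [mem_insert, mem_singleton] at hT
    rcases hT with rfl | rfl
    · exact mem_powerset.mpr (empty_subset _)
    · exact mem_powerset.mpr Subset.rfl
  rw [← Finset.sum_subset hsub]
  · rw [Finset.sum_pair hne, card_empty, hU]
    simp only [Nat.cast_zero]
    rw [ST_coefA_zero hd, ST_coefA_top hd]
    ring
  · intro T hT hT'
    simp only [mem_insert, mem_singleton, not_or] at hT'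
    have hTU : T ⊆ U := mem_powerset.mp hT
    have h1 : 1 ≤ T.card := card_pos.mpr (nonempty_iff_ne_empty.mpr hT'.1)
    have h2 : T.card < d := by
      have := card_lt_card (ssubset_of_subset_of_ne hTU hT'.2)
      omega
    rw [hU, ST_coefA_mid h1 h2, zero_mul]

lemma ST_sum_coefB {α : Type*} [DecidableEq α] {d : ℕ} (hd : 1 ≤ d) (U : Finset α)
    (hU : U.card = d - 1) (g : Finset α → ℝ) :
    ∑ T ∈ U.powerset,
        ((T.card : ℝ) * W (T.card - 1) d - ((U.card : ℝ) - T.card) * W T.card d) * g T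
      = (∑ T ∈ U.powerset, W T.card d * g T) - g ∅ := by
  have key : ∀ T ∈ U.powerset,
      ((T.card : ℝ) * W (T.card - 1) d - ((U.card : ℝ) - T.card) * W T.card d) * g T
        = W T.card d * g T + (if T = ∅ then -(g ∅) else 0) := by
    intro T hT
    by_cases hTe : T = ∅
    · subst hTe
      rw [card_empty, hU]
      simp only [Nat.cast_zero]
      rw [ST_coefB_zero hd]
      simp only [if_true]
      ring
    · have h1 : 1 ≤ T.card := card_pos.mpr (nonempty_iff_ne_empty.mpr hTe)
      have h2 : T.card < d := by
        have := card_le_card (mem_powerset.mp hT)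
        omega
      rw [hU, ST_coefB_pos h1 h2, if_neg hTe]
      ring
  rw [Finset.sum_congr rfl key, Finset.sum_add_distrib]
  congr 1
  rw [Finset.sum_ite_eq' U.powerset (∅ : Finset α) (fun _ => -(g ∅))]
  rw [if_pos (mem_powerset.mpr (empty_subset _))]

lemma ST_eff_phi {d : ℕ} (hd : 1 ≤ d) (ν : Finset (Fin d) → ℝ) :
    ∑ i : Fin d, ∑ T ∈ ((univ : Finset (Fin d)).erase i).powerset,
        W T.card d * (ν (insert i T) - ν T) = ν univ - ν ∅ := by
  rw [ST_sumC (univ : Finset (Fin d)) (fun t => W t d) ν]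
  exact ST_sum_coefA hd univ (by simp) ν

/-- Shapley-Taylor efficiency: the indices sum to ν([d]) - ν(∅). -/
theorem shapleyTaylor_efficiency {d : ℕ} (ν : Finset (Fin d) → ℝ) :
    ∑ i : Fin d, ∑ j : Fin d, shapleyTaylor ν i j = ν Finset.univ - ν ∅ := by
  rcases Nat.eq_zero_or_pos d with hd | hd
  · subst hd
    simp [Finset.univ_eq_empty]
  have key : ∀ i : Fin d, ∑ j : Fin d, shapleyTaylor ν i j
      = ∑ T ∈ ((univ : Finset (Fin d)).erase i).powerset,
          W T.card d * (ν (insert i T) - ν T) := by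
    intro i
    set f : Finset (Fin d) → ℝ := fun T => ν (insert i T) - ν T with hf
    rw [← Finset.add_sum_erase _ _ (mem_univ i)]
    have hdiag : shapleyTaylor ν i i = f ∅ := by
      rw [shapleyTaylor, if_pos rfl, hf]
      simp
    have hoff : ∑ j ∈ (univ : Finset (Fin d)).erase i, shapleyTaylor ν i j
        = ∑ j ∈ (univ : Finset (Fin d)).erase i,
            ∑ S ∈ (((univ : Finset (Fin d)).erase i).erase j).powerset,
              W S.card d * (f (insert j S) - f S) := by
      refine Finset.sum_congr rfl fun j hj => ?_
      have hij : ¬ (i = j) := fun h => (mem_erase.mp hj).1 h.symm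
      rw [shapleyTaylor, if_neg hij]
      refine Finset.sum_congr rfl fun S hS => ?_
      simp only [hf]
      ring
    rw [hdiag, hoff, ST_sumC ((univ : Finset (Fin d)).erase i) (fun t => W t d) f]
    have hUc : ((univ : Finset (Fin d)).erase i).card = d - 1 := by
      rw [card_erase_of_mem (mem_univ i)]
      simp
    rw [ST_sum_coefB hd _ hUc f]
    ring
  rw [Finset.sum_congr rfl (fun i _ => key i)]
  exact ST_eff_phi hd ν
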